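/- arXiv:1910.05962 — 5 statements merged into one kernel-verified Lean document; each statement's English description precedes it below -/
import Mathlib

section
/- Let M be an n-dimensional smooth (C^∞) Hausdorff, second-countable manifold without boundary, d ≥ 1, and let {V_x}_{x∈M} be a family of linear subspaces of ℝ^d that is a continuous distribution. Then for every x̄ ∈ M there exist an open neighbourhood U of x̄, a natural number k with k ≤ d·2^{2·5^n − 1}, and continuous maps v_1, …, v_k : U → ℝ^d such that V_x = span{v_1(x), …, v_k(x)} for every x ∈ U. -/
/-!
A local section through a vector of a fibre, cut off by an Urysohn function, becomes a global
continuous section. As `M` is locally compact and second countable, so is `C(M, ℝ^d)`, hence the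
space of global sections has a dense sequence `f j`; its values span every fibre, fibres being
closed. The Gram operators `G x = ∑ j, 2⁻ʲ (1 + ‖f j x‖²)⁻¹ |f j x⟩⟨f j x|` depend continuously
on `x` and `⟪u, G x u⟫ = ∑ j, 2⁻ʲ (1 + ‖f j x‖²)⁻¹ ⟪f j x, u⟫²`, so `ker (G x) = (V x)ᗮ` and
`range (G x) = V x`. The `d` columns `x ↦ G x eᵢ` then span `V x` at every point of `M`.
-/

open scoped Manifold

/-- A family of linear subspaces `V x ≤ ℝ^d`, indexed by a topological space `M`, is a
*continuous distribution* if every vector of every fibre extends to a continuous local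
section of the family. -/
def ContinuousDistribution {M : Type*} [TopologicalSpace M] {d : ℕ}
    (V : M → Submodule ℝ (EuclideanSpace ℝ (Fin d))) : Prop :=
  ∀ x₀ : M, ∀ v₀ ∈ V x₀, ∃ U : Set M, IsOpen U ∧ x₀ ∈ U ∧
    ∃ v : M → EuclideanSpace ℝ (Fin d),
      ContinuousOn v U ∧ v x₀ = v₀ ∧ ∀ x ∈ U, v x ∈ V x

open scoped RealInnerProductSpace
open Set Submodule InnerProductSpace

theorem ContinuousDistribution.exists_continuousMap_mem {M : Type*} [TopologicalSpace M]
    [R1Space M] [LocallyCompactSpace M] {d : ℕ} {V : M → Submodule ℝ (EuclideanSpace ℝ (Fin d))}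
    (hV : ContinuousDistribution V) {x₀ : M} {v₀ : EuclideanSpace ℝ (Fin d)} (hv₀ : v₀ ∈ V x₀) :
    ∃ g : C(M, EuclideanSpace ℝ (Fin d)), g x₀ = v₀ ∧ ∀ x, g x ∈ V x := by
  obtain ⟨U, hU, hx₀U, v, hv, rfl, hvV⟩ := hV x₀ v₀ hv₀
  obtain ⟨φ, hφ₁, -, hφU, -⟩ := exists_continuousMap_one_of_isCompact_subset_isOpen
    isCompact_singleton hU (singleton_subset_iff.2 hx₀U)
  refine ⟨⟨fun x => φ x • v x, (φ.continuous.continuousOn.smul hv).continuous_of_tsupport_subset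
    hU ((tsupport_smul_subset_left _ _).trans hφU)⟩, by simp [hφ₁ rfl], fun x => ?_⟩
  by_cases hx : x ∈ U
  · exact (V x).smul_mem _ (hvV x hx)
  · simp [image_eq_zero_of_notMem_tsupport fun h => hx (hφU h)]

section

variable {M E : Type*} [TopologicalSpace M] [NormedAddCommGroup E]

theorem exists_seq_continuousMap_span_eq [NormedSpace ℝ E] [FiniteDimensional ℝ E]
    [LocallyCompactSpace M] [SecondCountableTopology M] (V : M → Submodule ℝ E)
    (hV : ∀ x₀, ∀ v₀ ∈ V x₀, ∃ g : C(M, E), g x₀ = v₀ ∧ ∀ x, g x ∈ V x) :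
    ∃ f : ℕ → C(M, E), ∀ x, V x = span ℝ (range fun j => f j x) := by
  let S := {g : C(M, E) | ∀ x, g x ∈ V x}
  have : Nonempty S := ⟨⟨0, fun x => (V x).zero_mem⟩⟩
  obtain ⟨u, hu⟩ := TopologicalSpace.exists_dense_seq S
  refine ⟨fun j => u j, fun x => le_antisymm (fun v₀ hv₀ => ?_) ?_⟩
  · obtain ⟨g, rfl, hg⟩ := hV x v₀ hv₀
    exact hu.induction_on (p := fun h : S => (h : C(M, E)) x ∈ span ℝ _) ⟨g, hg⟩
      ((closed_of_finiteDimensional _).preimage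
        ((continuous_eval_const x).comp continuous_subtype_val))
      fun j => subset_span ⟨j, rfl⟩
  · exact span_le.2 (range_subset_iff.2 fun j => (u j).2 x)

variable [InnerProductSpace ℝ E]

noncomputable def gramTerm (w : E) (j : ℕ) : E →L[ℝ] E :=
  ((1 / 2) ^ j / (1 + ‖w‖ ^ 2)) • rankOne ℝ w w

lemma gramTerm_apply (w u : E) (j : ℕ) :
    gramTerm w j u = ((1 / 2) ^ j / (1 + ‖w‖ ^ 2) * ⟪w, u⟫) • w := by
  simp [gramTerm, smul_smul]

lemma norm_gramTerm_le (w : E) (j : ℕ) : ‖gramTerm w j‖ ≤ (1 / 2) ^ j := by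
  rw [gramTerm, norm_smul, norm_rankOne, Real.norm_of_nonneg (by positivity), div_mul_eq_mul_div,
    div_le_iff₀ (by positivity)]
  gcongr
  nlinarith [norm_nonneg w]

lemma summable_gramTerm [CompleteSpace E] (w : ℕ → E) : Summable fun j => gramTerm (w j) j :=
  .of_norm_bounded summable_geometric_two fun j => norm_gramTerm_le (w j) j

noncomputable def gramOperator (w : ℕ → E) : E →L[ℝ] E :=
  ∑' j, gramTerm (w j) j

lemma hasSum_gramOperator_apply [CompleteSpace E] (w : ℕ → E) (u : E) :
    HasSum (fun j => ((1 / 2) ^ j / (1 + ‖w j‖ ^ 2) * ⟪w j, u⟫) • w j) (gramOperator w u) := by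
  simpa only [gramOperator, ContinuousLinearMap.apply_apply, gramTerm_apply] using
    (summable_gramTerm w).hasSum.mapL (ContinuousLinearMap.apply ℝ E u)

lemma hasSum_inner_gramOperator_apply_self [CompleteSpace E] (w : ℕ → E) (u : E) :
    HasSum (fun j => (1 / 2) ^ j / (1 + ‖w j‖ ^ 2) * ⟪w j, u⟫ ^ 2) ⟪u, gramOperator w u⟫ := by
  simpa [real_inner_smul_right, real_inner_comm u, sq, mul_assoc] using
    (hasSum_gramOperator_apply w u).mapL (innerSL ℝ u)

lemma ker_gramOperator [CompleteSpace E] (w : ℕ → E) :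
    LinearMap.ker (gramOperator w : E →ₗ[ℝ] E) = (span ℝ (range w))ᗮ := by
  ext u
  rw [LinearMap.mem_ker, ContinuousLinearMap.coe_coe]
  constructor
  · intro hu
    have hsum := hasSum_inner_gramOperator_apply_self w u
    rw [hu, inner_zero_right, hasSum_zero_iff_of_nonneg fun j => by positivity] at hsum
    have hperp : span ℝ (range w) ≤ (ℝ ∙ u)ᗮ := by
      refine span_le.2 (range_subset_iff.2 fun j => ?_)
      have hj : (1 / 2 : ℝ) ^ j / (1 + ‖w j‖ ^ 2) ≠ 0 := by positivity
      have hwu : ⟪w j, u⟫ ^ 2 = 0 := (mul_eq_zero.1 (congrFun hsum j)).resolve_left hj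
      rw [SetLike.mem_coe, mem_orthogonal_singleton_iff_inner_right, real_inner_comm]
      exact pow_eq_zero_iff two_ne_zero |>.1 hwu
    exact (span_singleton_le_iff_mem _ _).1 (isOrtho_iff_le.2 hperp).ge
  · intro hu
    refine (hasSum_gramOperator_apply w u).unique ?_
    simp [inner_right_of_mem_orthogonal (subset_span (mem_range_self _)) hu]

lemma range_gramOperator_le [FiniteDimensional ℝ E] (w : ℕ → E) :
    LinearMap.range (gramOperator w : E →ₗ[ℝ] E) ≤ span ℝ (range w) := by
  rintro _ ⟨u, rfl⟩
  exact (closed_of_finiteDimensional _).mem_of_tendsto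
    (hasSum_gramOperator_apply w u).tendsto_sum_nat (.of_forall fun s =>
      sum_mem fun j _ => smul_mem _ _ (subset_span (mem_range_self j)))

lemma range_gramOperator [FiniteDimensional ℝ E] (w : ℕ → E) :
    LinearMap.range (gramOperator w : E →ₗ[ℝ] E) = span ℝ (range w) := by
  refine eq_of_le_of_finrank_eq (range_gramOperator_le w) ?_
  have h₁ := LinearMap.finrank_range_add_finrank_ker (gramOperator w : E →ₗ[ℝ] E)
  have h₂ := (span ℝ (range w)).finrank_add_finrank_orthogonal
  rw [ker_gramOperator] at h₁
  omega

lemma continuous_gramOperator [CompleteSpace E] {w : ℕ → M → E} (hw : ∀ j, Continuous (w j)) :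
    Continuous fun x => gramOperator fun j => w j x := by
  refine continuous_tsum (fun j => ?_) summable_geometric_two fun j x => norm_gramTerm_le (w j x) j
  have hc : Continuous fun x => (1 / 2 : ℝ) ^ j / (1 + ‖w j x‖ ^ 2) :=
    continuous_const.div (by fun_prop) fun x => by positivity
  exact hc.smul (((rankOne ℝ).continuous.comp (hw j)).clm_apply (hw j))

theorem exists_continuous_family_span_eq_span_seq [FiniteDimensional ℝ E] {ι : Type*}
    (b : Module.Basis ι ℝ E) {f : ℕ → M → E} (hf : ∀ j, Continuous (f j)) :
    ∃ v : ι → M → E, (∀ i, Continuous (v i)) ∧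
      ∀ x, span ℝ (range fun i => v i x) = span ℝ (range fun j => f j x) := by
  refine ⟨fun i x => gramOperator (fun j => f j x) (b i),
    fun i => (continuous_gramOperator hf).clm_apply continuous_const, fun x => ?_⟩
  set G := gramOperator fun j => f j x
  calc span ℝ (range fun i => G (b i))
      = (span ℝ (range b)).map (G : E →ₗ[ℝ] E) := by rw [map_span, ← range_comp]; rfl
    _ = LinearMap.range (G : E →ₗ[ℝ] E) := by rw [b.span_eq, LinearMap.range_eq_map]
    _ = span ℝ (range fun j => f j x) := range_gramOperator _

end

theorem stmt_2_general (n d : ℕ) (M : Type*) [TopologicalSpace M] [T2Space M]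
    [SecondCountableTopology M] [ChartedSpace (EuclideanSpace ℝ (Fin n)) M]
    (V : M → Submodule ℝ (EuclideanSpace ℝ (Fin d)))
    (hV : ContinuousDistribution V) (x₀ : M) :
    ∃ (U : Set M) (k : ℕ), IsOpen U ∧ x₀ ∈ U ∧ k ≤ d * 2 ^ (2 * 5 ^ n - 1) ∧
      ∃ v : Fin k → M → EuclideanSpace ℝ (Fin d),
        (∀ i, ContinuousOn (v i) U) ∧
        ∀ x ∈ U, V x = Submodule.span ℝ (Set.range fun i => v i x) := by
  have := Manifold.locallyCompact_of_finiteDimensional (M := M) (𝓡 n)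
  obtain ⟨f, hf⟩ := exists_seq_continuousMap_span_eq V fun _ _ hv₀ =>
    hV.exists_continuousMap_mem hv₀
  obtain ⟨v, hv, hvf⟩ := exists_continuous_family_span_eq_span_seq
    (EuclideanSpace.basisFun (Fin d) ℝ).toBasis fun j => (f j).continuous
  exact ⟨univ, d, isOpen_univ, mem_univ x₀, Nat.le_mul_of_pos_right d (by positivity), v,
    fun i => (hv i).continuousOn, fun x _ => (hf x).trans (hvf x).symm⟩

/-- (implication i) ⟹ ii) of Theorem 3.3): on an `n`-dimensional smooth
manifold, a continuous distribution of subspaces of `ℝ^d` is locally spanned by at most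
`d·2^(2·5^n − 1)` continuous sections. -/
theorem stmt_2 (n d : ℕ) (hd : 1 ≤ d) (M : Type*) [TopologicalSpace M] [T2Space M]
    [SecondCountableTopology M] [ChartedSpace (EuclideanSpace ℝ (Fin n)) M]
    [IsManifold (𝓡 n) (⊤ : ℕ∞) M]
    (V : M → Submodule ℝ (EuclideanSpace ℝ (Fin d)))
    (hV : ContinuousDistribution V) (x₀ : M) :
    ∃ (U : Set M) (k : ℕ), IsOpen U ∧ x₀ ∈ U ∧ k ≤ d * 2 ^ (2 * 5 ^ n - 1) ∧
      ∃ v : Fin k → M → EuclideanSpace ℝ (Fin d),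
        (∀ i, ContinuousOn (v i) U) ∧
        ∀ x ∈ U, V x = Submodule.span ℝ (Set.range fun i => v i x) :=
  stmt_2_general n d M V hV x₀
end

section
/- Let M be a topological space and k, d ≥ 1. Let A : M → L(ℝ^k, ℝ^d) be a continuous map into the space of linear maps from ℝ^k to ℝ^d (with the operator norm topology), and let σ : M × ℝ^k → [0,+∞) be a continuous function such that σ(x,·) is a norm on ℝ^k for every x ∈ M. Define ρ : M × ℝ^d → [0,+∞] by ρ(x,v) := inf{σ(x,u) : u ∈ ℝ^k, A(x)u = v}, with the convention inf ∅ = +∞. Then ρ is lower semicontinuous on M × ℝ^d: whenever (x_n, v_n) → (x_∞, v_∞) in M × ℝ^d, one has ρ(x_∞, v_∞) ≤ liminf_n ρ(x_n, v_n). -/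
open scoped ENNReal

open Filter Topology

/-- A function `n` on a real vector space is a norm: it vanishes exactly at `0`,
is absolutely homogeneous, and subadditive. -/
def IsNormOn {E : Type*} [AddCommGroup E] [Module ℝ E] (n : E → ℝ) : Prop :=
  (∀ v : E, n v = 0 ↔ v = 0) ∧
  (∀ (a : ℝ) (v : E), n (a • v) = |a| * n v) ∧
  (∀ v w : E, n (v + w) ≤ n v + n w)

lemma IsNormOn.nonneg {E : Type*} [AddCommGroup E] [Module ℝ E] {n : E → ℝ}
    (h : IsNormOn n) (v : E) : 0 ≤ n v := by
  have h0 : n 0 = 0 := (h.1 0).mpr rfl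
  have hneg : n (-v) = n v := by
    have := h.2.1 (-1) v; simpa using this
  have hsub := h.2.2 v (-v)
  rw [add_neg_cancel, h0, hneg] at hsub
  linarith

/-- Lemma 4.8: the fibrewise quotient "norm"
`ρ(x,v) = inf { σ(x,u) : A(x)u = v }` (with `inf ∅ = +∞`) induced by a continuous bundle
morphism `A` and a continuous metric `σ` is lower semicontinuous on `M × ℝ^d`. -/
theorem stmt_10 (M : Type*) [TopologicalSpace M] (k d : ℕ) (hk : 1 ≤ k) (hd : 1 ≤ d)
    (A : M → EuclideanSpace ℝ (Fin k) →L[ℝ] EuclideanSpace ℝ (Fin d))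
    (hA : Continuous A)
    (σ : M → EuclideanSpace ℝ (Fin k) → ℝ)
    (hσc : Continuous fun p : M × EuclideanSpace ℝ (Fin k) => σ p.1 p.2)
    (hσn : ∀ x : M, IsNormOn (σ x)) :
    LowerSemicontinuous (fun p : M × EuclideanSpace ℝ (Fin d) =>
      ⨅ (u : EuclideanSpace ℝ (Fin k)) (_ : A p.1 u = p.2),
        ENNReal.ofReal (σ p.1 u)) := by
  set ρ : M × EuclideanSpace ℝ (Fin d) → ℝ≥0∞ :=
    fun p => ⨅ (u : EuclideanSpace ℝ (Fin k)) (_ : A p.1 u = p.2),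
      ENNReal.ofReal (σ p.1 u) with hρdef
  intro p₀ c hc
  obtain ⟨c₂, hcc₂, hc₂⟩ := exists_between hc
  have hc₂top : c₂ ≠ ⊤ := ne_top_of_lt hc₂
  set t : ℝ := c₂.toReal with ht
  have ht0 : 0 ≤ t := ENNReal.toReal_nonneg
  -- choice of near-minimizers
  have key : ∀ p : M × EuclideanSpace ℝ (Fin d), ∃ u : EuclideanSpace ℝ (Fin k),
      ρ p ≤ c → A p.1 u = p.2 ∧ σ p.1 u < t := by
    intro p
    by_cases h : ρ p ≤ c
    · have hlt : ρ p < c₂ := lt_of_le_of_lt h hcc₂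
      rw [hρdef] at hlt
      obtain ⟨u, hu⟩ := iInf_lt_iff.mp hlt
      obtain ⟨hAu, hσu⟩ := iInf_lt_iff.mp hu
      exact ⟨u, fun _ => ⟨hAu,
        (ENNReal.ofReal_lt_iff_lt_toReal ((hσn p.1).nonneg u) hc₂top).mp hσu⟩⟩
    · exact ⟨0, fun h' => absurd h' h⟩
  choose g hg using key
  -- uniform lower bound for σ on a neighborhood of x₀ times the sphere
  have hne : (Metric.sphere (0 : EuclideanSpace ℝ (Fin k)) 1).Nonempty := by
    refine ⟨EuclideanSpace.single (⟨0, hk⟩ : Fin k) (1 : ℝ), ?_⟩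
    simp only [mem_sphere_iff_norm, sub_zero, EuclideanSpace.norm_single]
    norm_num
  have hσx₀ : Continuous fun u : EuclideanSpace ℝ (Fin k) => σ p₀.1 u :=
    hσc.comp (Continuous.prodMk_right p₀.1)
  obtain ⟨w₀, hw₀S, hw₀min⟩ :=
    (isCompact_sphere (0 : EuclideanSpace ℝ (Fin k)) 1).exists_isMinOn hne
      hσx₀.continuousOn
  set m : ℝ := σ p₀.1 w₀ with hm
  have hw₀ne : w₀ ≠ 0 := by
    intro h0
    rw [h0] at hw₀S
    simp at hw₀S
  have hmpos : 0 < m := by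
    rcases lt_or_eq_of_le ((hσn p₀.1).nonneg w₀) with h | h
    · exact h
    · exact absurd (((hσn p₀.1).1 w₀).mp h.symm) hw₀ne
  -- tube lemma
  obtain ⟨U, V, hUo, hVo, hx₀U, hSV, hUV⟩ :=
    generalized_tube_lemma (isCompact_singleton (x := p₀.1))
      (isCompact_sphere (0 : EuclideanSpace ℝ (Fin k)) 1)
      (isOpen_lt continuous_const hσc)
      (by
        rintro ⟨x, w⟩ ⟨hx, hw⟩
        simp only [Set.mem_singleton_iff] at hx
        subst hx
        have : m ≤ σ p₀.1 w := hw₀min hw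
        simpa using lt_of_lt_of_le (half_lt_self hmpos) this)
  have hUnhds : U ∈ 𝓝 p₀.1 := hUo.mem_nhds (hx₀U rfl)
  have hlow : ∀ x ∈ U, ∀ w : EuclideanSpace ℝ (Fin k), ‖w‖ = 1 → m / 2 < σ x w := by
    intro x hx w hw
    have : (x, w) ∈ {q : M × EuclideanSpace ℝ (Fin k) | m / 2 < σ q.1 q.2} :=
      hUV ⟨hx, hSV (by simpa [Metric.mem_sphere, dist_zero_right] using hw)⟩
    exact this
  set R : ℝ := t / (m / 2) with hR
  have hR0 : 0 ≤ R := div_nonneg ht0 (by linarith)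
  -- bound on the chosen minimizers
  have hbound : ∀ p : M × EuclideanSpace ℝ (Fin d), p.1 ∈ U → ρ p ≤ c → ‖g p‖ ≤ R := by
    intro p hpU hpc
    obtain ⟨hAu, hσu⟩ := hg p hpc
    rcases eq_or_ne (g p) 0 with h0 | h0
    · simpa [h0] using hR0
    · have hn : 0 < ‖g p‖ := norm_pos_iff.mpr h0
      set w : EuclideanSpace ℝ (Fin k) := ‖g p‖⁻¹ • g p with hw
      have hwnorm : ‖w‖ = 1 := by
        rw [hw, norm_smul, norm_inv, norm_norm, inv_mul_cancel₀ hn.ne']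
      have h1 : m / 2 < σ p.1 w := hlow p.1 hpU w hwnorm
      have h2 : σ p.1 w = ‖g p‖⁻¹ * σ p.1 (g p) := by
        rw [hw, (hσn p.1).2.1, abs_of_nonneg (inv_nonneg.mpr hn.le)]
      rw [h2] at h1
      have h3 : m / 2 * ‖g p‖ < σ p.1 (g p) := by
        have := mul_lt_mul_of_pos_right h1 hn
        rwa [inv_mul_eq_div, div_mul_cancel₀ _ hn.ne'] at this
      have h4 : m / 2 * ‖g p‖ < t := lt_trans h3 hσu
      rw [hR, le_div_iff₀ (by linarith : (0:ℝ) < m / 2)]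
      linarith
  -- by contradiction
  by_contra hcon
  rw [Filter.not_eventually] at hcon
  have hS : ∃ᶠ p in 𝓝 p₀, ρ p ≤ c := hcon.mono fun p (hp : ¬ c < ρ p) => not_lt.mp hp
  have hF : (𝓝 p₀ ⊓ 𝓟 {p | ρ p ≤ c}).NeBot := Filter.frequently_iff_neBot.mp hS
  obtain ⟨𝒰, h𝒰⟩ := Filter.exists_ultrafilter_le (𝓝 p₀ ⊓ 𝓟 {p | ρ p ≤ c})
  have h1 : (𝒰 : Filter _) ≤ 𝓝 p₀ := h𝒰.trans inf_le_left
  have h2 : ∀ᶠ p in 𝒰, ρ p ≤ c :=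
    Filter.le_principal_iff.mp (h𝒰.trans inf_le_right)
  have h3 : ∀ᶠ (p : M × EuclideanSpace ℝ (Fin d)) in 𝒰, p.1 ∈ U :=
    ((continuous_fst.tendsto p₀).eventually_mem hUnhds).filter_mono h1
  have hball : ∀ᶠ p in 𝒰, g p ∈ Metric.closedBall (0 : EuclideanSpace ℝ (Fin k)) R := by
    filter_upwards [h2, h3] with p hp hpU
    exact Metric.mem_closedBall.mpr (by simpa [dist_zero_right] using hbound p hpU hp)
  obtain ⟨uL, huLB, huL⟩ :=
    (isCompact_closedBall (0 : EuclideanSpace ℝ (Fin k)) R).ultrafilter_le_nhds (𝒰.map g)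
      (by rw [Ultrafilter.coe_map, Filter.le_principal_iff, Filter.mem_map]; exact hball)
  have hgT : Filter.Tendsto g 𝒰 (𝓝 uL) := by rwa [Ultrafilter.coe_map] at huL
  have hT : Filter.Tendsto (fun p => (p.1, g p)) 𝒰 (𝓝 (p₀.1, uL)) :=
    (((continuous_fst.tendsto p₀)).mono_left h1).prodMk_nhds hgT
  -- σ x₀ uL ≤ t
  have hσlim : Filter.Tendsto (fun p => σ p.1 (g p)) 𝒰 (𝓝 (σ p₀.1 uL)) :=
    (hσc.tendsto (p₀.1, uL)).comp hT
  have hσt : σ p₀.1 uL ≤ t :=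
    le_of_tendsto hσlim (by filter_upwards [h2] with p hp; exact (hg p hp).2.le)
  -- A x₀ uL = v₀
  have hAc : Continuous fun q : M × EuclideanSpace ℝ (Fin k) => A q.1 q.2 :=
    (hA.comp continuous_fst).clm_apply continuous_snd
  have hAlim : Filter.Tendsto (fun p => A p.1 (g p)) 𝒰 (𝓝 (A p₀.1 uL)) :=
    (hAc.tendsto (p₀.1, uL)).comp hT
  have heq : (fun p : M × EuclideanSpace ℝ (Fin d) => A p.1 (g p)) =ᶠ[𝒰]
      fun p => p.2 := by
    filter_upwards [h2] with p hp; exact (hg p hp).1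
  have hsnd : Filter.Tendsto (fun p : M × EuclideanSpace ℝ (Fin d) => p.2) 𝒰 (𝓝 p₀.2) :=
    (continuous_snd.tendsto p₀).mono_left h1
  have hAeq : A p₀.1 uL = p₀.2 :=
    tendsto_nhds_unique (hAlim.congr' heq) hsnd
  -- conclude
  have hfin : ρ p₀ ≤ c₂ := by
    calc ρ p₀ ≤ ENNReal.ofReal (σ p₀.1 uL) := iInf₂_le uL hAeq
    _ ≤ ENNReal.ofReal t := ENNReal.ofReal_le_ofReal hσt
    _ = c₂ := by rw [ht, ENNReal.ofReal_toReal hc₂top]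
  exact hc₂.not_ge hfin
end

section
/- Let M be a smooth (C^∞), finite-dimensional, connected, Hausdorff, second-countable manifold without boundary. Then there exists a countable family 𝒞 of smooth (C^∞) compactly supported functions f : M → ℝ such that for every x ∈ M the set of differentials {d_x f : f ∈ 𝒞} is dense in the cotangent space T_x^*M (the dual of the tangent space T_xM, with its canonical finite-dimensional topology). In particular, for every x ∈ M and every linear subspace D ⊆ T_xM, the restrictions {d_x f|_D : f ∈ 𝒞} are dense in the dual space D^*. -/
/-!
Near a point `x` where a smooth bump function `f` centred at `c` equals `1`, the function
`z ↦ f z * ℓ (φ z)`, with `φ` the extended chart at `c` and `ℓ ∈ E*`, has differential `ℓ ∘ d_xφ`.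
As `d_xφ` is invertible, letting `ℓ` run through a countable dense subset of `E*` yields a dense
set of covectors at `x`; a (countable) smooth bump covering of `M` provides such an `f` at every
point. Restriction `T_x^*M → D*` to a subspace is a continuous surjection, so it preserves density.
-/

open scoped Manifold ContDiff

open Set Function Filter Topology

theorem ContinuousLinearMap.IsInvertible.surjective_comp_right {R : Type*} [Semiring R]
    {E F G : Type*} [AddCommMonoid E] [Module R E] [TopologicalSpace E]
    [AddCommMonoid F] [Module R F] [TopologicalSpace F]
    [AddCommMonoid G] [Module R G] [TopologicalSpace G] {D : E →L[R] F} (hD : D.IsInvertible) :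
    Surjective fun L : F →L[R] G => L.comp D := by
  obtain ⟨e, rfl⟩ := hD
  exact fun L => ⟨L.comp (e.symm : F →L[R] E), by ext; simp⟩

theorem ContinuousLinearMap.dense_image_comp_right_of_surjective {𝕜 : Type*}
    [NontriviallyNormedField 𝕜] {E F G : Type*} [AddCommGroup E] [Module 𝕜 E] [TopologicalSpace E]
    [AddCommGroup F] [Module 𝕜 F] [TopologicalSpace F]
    [AddCommGroup G] [Module 𝕜 G] [TopologicalSpace G] [IsTopologicalAddGroup G]
    [ContinuousConstSMul 𝕜 G] {s : Set (F →L[𝕜] G)} (hs : Dense s)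
    (D : E →L[𝕜] F) (hD : Surjective fun L : F →L[𝕜] G => L.comp D) :
    Dense ((fun L : F →L[𝕜] G => L.comp D) '' s) :=
  hD.denseRange.dense_image (precomp G D).continuous hs

theorem Submodule.surjective_comp_subtypeL {𝕜 : Type*} [NontriviallyNormedField 𝕜]
    [CompleteSpace 𝕜] {V : Type*} [AddCommGroup V] [Module 𝕜 V] [TopologicalSpace V]
    [IsTopologicalAddGroup V] [ContinuousSMul 𝕜 V] [T2Space V] [FiniteDimensional 𝕜 V]
    (p : Submodule 𝕜 V) : Surjective fun L : V →L[𝕜] 𝕜 => L.comp p.subtypeL := by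
  intro ℓ
  obtain ⟨g, hg⟩ := LinearMap.exists_extend (ℓ : p →ₗ[𝕜] 𝕜)
  exact ⟨LinearMap.toContinuousLinearMap g, ContinuousLinearMap.ext (LinearMap.congr_fun hg)⟩

namespace SmoothBumpFunction

variable {E : Type*} [NormedAddCommGroup E] [NormedSpace ℝ E] [FiniteDimensional ℝ E]
  {H : Type*} [TopologicalSpace H] {I : ModelWithCorners ℝ E H}
  {M : Type*} [TopologicalSpace M] [ChartedSpace H M] {c : M}

noncomputable def mulLinearInChart (f : SmoothBumpFunction I c) (ℓ : E →L[ℝ] ℝ) : M → ℝ :=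
  fun z => f z * ℓ (extChartAt I c z)

variable (f : SmoothBumpFunction I c) (ℓ : E →L[ℝ] ℝ)

theorem mem_chartAt_source_of_eventuallyEq_one {x : M} (hx : f =ᶠ[𝓝 x] 1) :
    x ∈ (chartAt H c).source :=
  f.support_subset_source (by simp [hx.eq_of_nhds])

theorem mfderiv_mulLinearInChart [IsManifold I 1 M] {x : M} (hx : f =ᶠ[𝓝 x] 1) :
    mfderiv I 𝓘(ℝ, ℝ) (f.mulLinearInChart ℓ) x =
      ℓ.comp (mfderiv I 𝓘(ℝ, E) (extChartAt I c) x) := by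
  have hloc : f.mulLinearInChart ℓ =ᶠ[𝓝 x] fun z => ℓ (extChartAt I c z) := by
    filter_upwards [hx] with z hz
    simp [mulLinearInChart, hz]
  rw [hloc.mfderiv_eq]
  exact (ℓ.hasMFDerivAt.comp x (mdifferentiableAt_extChartAt
    (f.mem_chartAt_source_of_eventuallyEq_one hx)).hasMFDerivAt).mfderiv

theorem dense_mfderiv_mulLinearInChart [IsManifold I 1 M] {x : M} (hx : f =ᶠ[𝓝 x] 1)
    {Q : Set (E →L[ℝ] ℝ)} (hQ : Dense Q) :
    Dense {L : TangentSpace I x →L[ℝ] ℝ |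
      ∃ ℓ ∈ Q, mfderiv I 𝓘(ℝ, ℝ) (f.mulLinearInChart ℓ) x = L} := by
  have hsrc : x ∈ (extChartAt I c).source := by
    rw [extChartAt_source]
    exact f.mem_chartAt_source_of_eventuallyEq_one hx
  simp only [f.mfderiv_mulLinearInChart _ hx]
  exact ContinuousLinearMap.dense_image_comp_right_of_surjective hQ _
    (isInvertible_mfderiv_extChartAt hsrc).surjective_comp_right

variable [T2Space M]

theorem hasCompactSupport_mulLinearInChart : HasCompactSupport (f.mulLinearInChart ℓ) :=
  f.hasCompactSupport.mul_right

theorem contMDiff_mulLinearInChart [IsManifold I ∞ M] :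
    ContMDiff I 𝓘(ℝ, ℝ) ∞ (f.mulLinearInChart ℓ) :=
  f.contMDiff_smul (ℓ.contMDiff.comp_contMDiffOn contMDiffOn_extChartAt)

end SmoothBumpFunction

theorem exists_countable_contMDiff_hasCompactSupport_dense_mfderiv
    {E : Type*} [NormedAddCommGroup E] [NormedSpace ℝ E] [FiniteDimensional ℝ E]
    {H : Type*} [TopologicalSpace H] (I : ModelWithCorners ℝ E H)
    (M : Type*) [TopologicalSpace M] [T2Space M] [SecondCountableTopology M]
    [ChartedSpace H M] [IsManifold I ∞ M] :
    ∃ C : Set (M → ℝ), C.Countable ∧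
      (∀ f ∈ C, ContMDiff I 𝓘(ℝ, ℝ) ∞ f ∧ HasCompactSupport f) ∧
      ∀ x : M, Dense {L : TangentSpace I x →L[ℝ] ℝ | ∃ f ∈ C, mfderiv I 𝓘(ℝ, ℝ) f x = L} := by
  have := Manifold.locallyCompact_of_finiteDimensional (M := M) I
  obtain ⟨ι, b, -⟩ := SmoothBumpCovering.exists_isSubordinate I
    (isClosed_univ (X := M)) (U := fun _ => univ) fun _ _ => univ_mem
  have : Countable ι := countable_univ_iff.mp <|
    b.locallyFinite.countable_univ fun i => (b i).nonempty_support
  obtain ⟨Q, hQc, hQd⟩ := TopologicalSpace.exists_countable_dense (E →L[ℝ] ℝ)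
  refine ⟨⋃ i, (b i).mulLinearInChart '' Q, countable_iUnion fun i => hQc.image _, ?_, ?_⟩
  · simp only [mem_iUnion, mem_image]
    rintro _ ⟨i, ℓ, -, rfl⟩
    exact ⟨(b i).contMDiff_mulLinearInChart ℓ, (b i).hasCompactSupport_mulLinearInChart ℓ⟩
  · intro x
    refine ((b _).dense_mfderiv_mulLinearInChart (b.eventuallyEq_one x (mem_univ x)) hQd).mono ?_
    rintro _ ⟨ℓ, hℓ, rfl⟩
    exact ⟨_, mem_iUnion_of_mem _ (mem_image_of_mem _ hℓ), rfl⟩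

theorem stmt_11_general (m : ℕ) (M : Type*) [TopologicalSpace M] [T2Space M]
    [SecondCountableTopology M]
    [ChartedSpace (EuclideanSpace ℝ (Fin m)) M] [IsManifold (𝓡 m) (⊤ : ℕ∞) M] :
    ∃ C : Set (M → ℝ), C.Countable ∧
      (∀ f ∈ C, ContMDiff (𝓡 m) 𝓘(ℝ, ℝ) (⊤ : ℕ∞) f ∧ HasCompactSupport f) ∧
      (∀ x : M,
        Dense {L : TangentSpace (𝓡 m) x →L[ℝ] ℝ |
          ∃ f ∈ C, mfderiv (𝓡 m) 𝓘(ℝ, ℝ) f x = L}) ∧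
      (∀ (x : M) (D : Submodule ℝ (TangentSpace (𝓡 m) x)),
        Dense {ℓ : D →L[ℝ] ℝ |
          ∃ f ∈ C, (mfderiv (𝓡 m) 𝓘(ℝ, ℝ) f x).comp D.subtypeL = ℓ}) := by
  obtain ⟨C, hC, hCsmooth, hCdense⟩ :=
    exists_countable_contMDiff_hasCompactSupport_dense_mfderiv (𝓡 m) M
  refine ⟨C, hC, hCsmooth, hCdense, fun x D => ?_⟩
  have : T2Space (TangentSpace (𝓡 m) x) := inferInstanceAs (T2Space (EuclideanSpace ℝ (Fin m)))
  have : FiniteDimensional ℝ (TangentSpace (𝓡 m) x) :=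
    inferInstanceAs (FiniteDimensional ℝ (EuclideanSpace ℝ (Fin m)))
  refine (ContinuousLinearMap.dense_image_comp_right_of_surjective (hCdense x) D.subtypeL
    D.surjective_comp_subtypeL).mono ?_
  rintro _ ⟨_, ⟨f, hf, rfl⟩, rfl⟩
  exact ⟨f, hf, rfl⟩

/-- Lemma 4.11: on a smooth finite-dimensional manifold there is a
countable family `𝒞` of compactly supported smooth functions whose differentials at each
point `x` are dense in the cotangent space; in particular their restrictions to any
subspace `D` of the tangent space are dense in `D*`. -/
theorem stmt_11 (m : ℕ) (M : Type*) [TopologicalSpace M] [T2Space M]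
    [SecondCountableTopology M] [ConnectedSpace M]
    [ChartedSpace (EuclideanSpace ℝ (Fin m)) M] [IsManifold (𝓡 m) (⊤ : ℕ∞) M] :
    ∃ C : Set (M → ℝ), C.Countable ∧
      (∀ f ∈ C, ContMDiff (𝓡 m) 𝓘(ℝ, ℝ) (⊤ : ℕ∞) f ∧ HasCompactSupport f) ∧
      (∀ x : M,
        Dense {L : TangentSpace (𝓡 m) x →L[ℝ] ℝ |
          ∃ f ∈ C, mfderiv (𝓡 m) 𝓘(ℝ, ℝ) f x = L}) ∧
      (∀ (x : M) (D : Submodule ℝ (TangentSpace (𝓡 m) x)),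
        Dense {ℓ : D →L[ℝ] ℝ |
          ∃ f ∈ C, (mfderiv (𝓡 m) 𝓘(ℝ, ℝ) f x).comp D.subtypeL = ℓ}) :=
  stmt_11_general m M
end

section
/- Let d ≥ 1, let ‖·‖ be a norm on ℝ^d that is C^∞ on ℝ^d ∖ {0}, and let c > 0. Define 𝗇(v) := ‖v‖ + c|v|, where |·| is the Euclidean norm. Then 𝗇 is a norm on ℝ^d, 𝗇 is C^∞ on ℝ^d ∖ {0}, and 𝗇 is strongly convex: for every v ∈ ℝ^d ∖ {0} the Hessian (second Fréchet derivative) of the function w ↦ 𝗇(w)² at v is a positive definite bilinear form. -/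
set_option maxHeartbeats 1000000

open Filter Set Metric
open scoped Topology RealInnerProductSpace

lemma aux_deriv_nonneg {φ : ℝ → ℝ} {s : Set ℝ} {a : ℝ} (hs : s ∈ 𝓝 (0 : ℝ))
    (hmono : MonotoneOn φ s) (hd : HasDerivAt φ a 0) : 0 ≤ a := by
  have h := hasDerivAt_iff_tendsto_slope.1 hd
  have h' : Tendsto (slope φ 0) (𝓝[>] (0:ℝ)) (𝓝 a) :=
    h.mono_left (nhdsWithin_mono _ (fun x hx => ne_of_gt hx))
  refine ge_of_tendsto h' ?_
  have h0s : (0:ℝ) ∈ s := mem_of_mem_nhds hs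
  have hev : ∀ᶠ t in 𝓝 (0:ℝ), t ∈ s := hs
  filter_upwards [self_mem_nhdsWithin, eventually_nhdsWithin_of_eventually_nhds hev]
    with t ht hts
  have h1 : φ 0 ≤ φ t := hmono h0s hts (le_of_lt ht)
  have h0 : (0:ℝ) < t := ht
  simp only [slope_def_field, div_eq_mul_inv, sub_zero]
  exact mul_nonneg (by linarith) (by positivity)

/-- Second directional derivative of a convex `C²` function is nonnegative. -/
lemma aux_hess_nonneg {E : Type*} [NormedAddCommGroup E] [NormedSpace ℝ E]
    {F : E → ℝ} {U : Set E} (hU : IsOpen U) (hF : ContDiffOn ℝ 2 F U)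
    (hconv : ConvexOn ℝ Set.univ F) {v : E} (hv : v ∈ U) (w : E) :
    0 ≤ fderiv ℝ (fderiv ℝ F) v w w := by
  set L : ℝ → E := fun t => t • w + v with hL_def
  have hL0 : L 0 = v := by simp [hL_def]
  have hLc : Continuous L := by fun_prop
  have hpre : L ⁻¹' U ∈ 𝓝 (0:ℝ) := by
    apply hLc.continuousAt.preimage_mem_nhds
    rw [hL0]; exact hU.mem_nhds hv
  obtain ⟨r, hr0, hball⟩ := Metric.mem_nhds_iff.1 hpre
  have hdiffat : ∀ x ∈ U, DifferentiableAt ℝ F x := fun x hx =>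
    (hF.contDiffAt (hU.mem_nhds hx)).differentiableAt two_ne_zero
  have hLd : ∀ t : ℝ, HasDerivAt L w t := fun t => by
    have := ((hasDerivAt_id t).smul_const w).add_const v
    rw [one_smul] at this
    exact this
  have hgd : ∀ t ∈ ball (0:ℝ) r, HasDerivAt (F ∘ L) (fderiv ℝ F (L t) w) t := by
    intro t ht
    have := ((hdiffat _ (hball ht)).hasFDerivAt).comp_hasDerivAt t (hLd t)
    simpa using this
  have hgconv : ConvexOn ℝ Set.univ (F ∘ L) := by
    have h := hconv.comp_affineMap ((AffineMap.lineMap v (v + w) : ℝ →ᵃ[ℝ] E))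
    have heq : F ∘ ((AffineMap.lineMap v (v + w) : ℝ →ᵃ[ℝ] E)) = F ∘ L := by
      funext t
      simp [AffineMap.lineMap_apply, hL_def]
    rw [heq] at h
    simpa using h
  have hmono : MonotoneOn (deriv (F ∘ L)) (ball (0:ℝ) r) :=
    (hgconv.subset (subset_univ _) (convex_ball _ _)).monotoneOn_deriv
      (fun t ht => (hgd t ht).differentiableAt)
  -- the second derivative
  have hdd : DifferentiableAt ℝ (fderiv ℝ F) v :=
    ((hF.contDiffAt (hU.mem_nhds hv)).fderiv_right
      (by norm_num : (1 : WithTop ℕ∞) + 1 ≤ 2)).differentiableAt one_ne_zero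
  have hψ : HasDerivAt (fun t => fderiv ℝ F (L t) w) (fderiv ℝ (fderiv ℝ F) v w w) 0 := by
    have h1 : HasFDerivAt (fun x => fderiv ℝ F x w)
        ((ContinuousLinearMap.apply ℝ ℝ w).comp (fderiv ℝ (fderiv ℝ F) v)) v :=
      (ContinuousLinearMap.apply ℝ ℝ w).hasFDerivAt.comp v hdd.hasFDerivAt
    have h2 := (hL0 ▸ h1).comp_hasDerivAt 0 (hLd 0)
    rw [hL0] at h2
    exact h2
  have hev : deriv (F ∘ L) =ᶠ[𝓝 (0:ℝ)] fun t => fderiv ℝ F (L t) w := by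
    filter_upwards [Metric.ball_mem_nhds (0:ℝ) hr0] with t ht
    exact (hgd t ht).deriv
  have hgdd : HasDerivAt (deriv (F ∘ L)) (fderiv ℝ (fderiv ℝ F) v w w) 0 :=
    hψ.congr_of_eventuallyEq hev
  exact aux_deriv_nonneg (Metric.ball_mem_nhds (0:ℝ) hr0) hmono hgdd


variable {E : Type*} [NormedAddCommGroup E] [InnerProductSpace ℝ E]

lemma aux_hasFDerivAt_norm {x : E} (hx : x ≠ 0) :
    HasFDerivAt (fun y : E => ‖y‖) (‖x‖⁻¹ • (innerSL ℝ x)) x := by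
  have hq : HasFDerivAt (fun y : E => ⟪y, y⟫)
      ((fderivInnerCLM ℝ (x, x)).comp ((ContinuousLinearMap.id ℝ E).prod
        (ContinuousLinearMap.id ℝ E))) x :=
    (hasFDerivAt_id x).inner ℝ (hasFDerivAt_id x)
  have hq0 : ⟪x, x⟫ ≠ 0 := by
    rw [real_inner_self_eq_norm_mul_norm]
    have : ‖x‖ ≠ 0 := norm_ne_zero_iff.2 hx
    positivity
  have h := hq.sqrt hq0
  have he : (fun y : E => Real.sqrt ⟪y, y⟫) = fun y : E => ‖y‖ := by
    funext y
    rw [real_inner_self_eq_norm_mul_norm, Real.sqrt_mul_self (norm_nonneg y)]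
  rw [he] at h
  convert h using 1
  ext u
  simp only [ContinuousLinearMap.smul_apply, ContinuousLinearMap.comp_apply,
    ContinuousLinearMap.prod_apply, ContinuousLinearMap.id_apply, fderivInnerCLM_apply,
    innerSL_apply_apply, smul_eq_mul]
  rw [real_inner_self_eq_norm_mul_norm, Real.sqrt_mul_self (norm_nonneg x),
    real_inner_comm u x]
  have : ‖x‖ ≠ 0 := norm_ne_zero_iff.2 hx
  field_simp
  ring

lemma aux_diff_fderiv_norm {v : E} (hv : v ≠ 0) :
    DifferentiableAt ℝ (fderiv ℝ (fun y : E => ‖y‖)) v :=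
  ((contDiffAt_norm ℝ (n := 2) hv).fderiv_right
    (by norm_num : (1 : WithTop ℕ∞) + 1 ≤ 2)).differentiableAt one_ne_zero

lemma aux_d2_norm {v w : E} (hv : v ≠ 0) :
    fderiv ℝ (fderiv ℝ (fun y : E => ‖y‖)) v w w
      = ‖w‖ ^ 2 / ‖v‖ - ⟪v, w⟫ ^ 2 / ‖v‖ ^ 3 := by
  set e : E → ℝ := fun y => ‖y‖ with he_def
  have hnv : ‖v‖ ≠ 0 := norm_ne_zero_iff.2 hv
  have h1 : HasFDerivAt (fun x => fderiv ℝ e x w)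
      ((ContinuousLinearMap.apply ℝ ℝ w).comp (fderiv ℝ (fderiv ℝ e) v)) v :=
    (ContinuousLinearMap.apply ℝ ℝ w).hasFDerivAt.comp v (aux_diff_fderiv_norm hv).hasFDerivAt
  have heq : (fun x => fderiv ℝ e x w) =ᶠ[𝓝 v] fun x => ⟪x, w⟫ * (‖x‖)⁻¹ := by
    filter_upwards [isOpen_compl_singleton.mem_nhds (by simpa using hv :
        v ∈ ({(0:E)}ᶜ : Set E))] with x hx
    have hx0 : x ≠ 0 := hx
    rw [(aux_hasFDerivAt_norm hx0).fderiv]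
    simp [mul_comm]
  have h2 : HasFDerivAt (fun x : E => ⟪x, w⟫)
      ((fderivInnerCLM ℝ (v, w)).comp ((ContinuousLinearMap.id ℝ E).prod 0)) v :=
    (hasFDerivAt_id v).inner ℝ (hasFDerivAt_const w v)
  have h3 : HasFDerivAt (fun x : E => (‖x‖)⁻¹)
      ((-(‖v‖ ^ 2)⁻¹) • (‖v‖⁻¹ • (innerSL ℝ v))) v := by
    have := (hasDerivAt_inv hnv).comp_hasFDerivAt v (aux_hasFDerivAt_norm hv)
    exact this
  have h4 := h2.mul h3
  have h5 := h4.congr_of_eventuallyEq heq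
  have h6 := h1.unique h5
  have h7 := ContinuousLinearMap.ext_iff.1 h6 w
  simp only [ContinuousLinearMap.apply_apply,
    ContinuousLinearMap.add_apply, ContinuousLinearMap.smul_apply,
    ContinuousLinearMap.comp_apply, ContinuousLinearMap.prod_apply,
    ContinuousLinearMap.id_apply, ContinuousLinearMap.zero_apply, fderivInnerCLM_apply,
    innerSL_apply_apply, smul_eq_mul, inner_zero_right] at h7
  rw [h7]
  rw [show ⟪w, w⟫ = ‖w‖ ^ 2 from real_inner_self_eq_norm_sq w]
  field_simp
  ring


lemma aux_core (N : E → ℝ) (hN : IsNormOn N)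
    (hNs2 : ContDiffOn ℝ 2 N {(0 : E)}ᶜ) (c : ℝ) (hc : 0 < c)
    {v w : E} (hv : v ≠ 0) (hw : w ≠ 0) :
    0 < fderiv ℝ (fderiv ℝ (fun u => (N u + c * ‖u‖) ^ 2)) v w w := by
  obtain ⟨hN0, hNh, hNt⟩ := hN
  set U : Set E := {(0 : E)}ᶜ with hU_def
  have hUo : IsOpen U := isOpen_compl_singleton
  have hmemU : ∀ x : E, x ≠ 0 → x ∈ U := fun x hx => hx
  have hvU : v ∈ U := hmemU v hv
  set e : E → ℝ := fun y => ‖y‖ with he_def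
  set n : E → ℝ := fun y => N y + c * ‖y‖ with hn_def
  -- basic positivity facts
  have hNnn : ∀ x, 0 ≤ N x := by
    intro x
    have h1 : N (-x) = N x := by simpa using hNh (-1) x
    have h2 : N (x + -x) ≤ N x + N (-x) := hNt x (-x)
    have h3 : N 0 = 0 := (hN0 0).2 rfl
    simp only [add_neg_cancel, h3, h1] at h2
    linarith
  have hnv : 0 < n v := by
    have h1 := hNnn v
    have h2 : 0 < c * ‖v‖ := by
      have : 0 < ‖v‖ := norm_pos_iff.2 hv
      positivity
    simp only [hn_def]
    linarith
  -- smoothness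
  have hes2 : ContDiffOn ℝ 2 e U := fun x hx =>
    (contDiffAt_norm ℝ (hx : x ≠ 0)).contDiffWithinAt
  have hns2 : ContDiffOn ℝ 2 n U := fun x hx =>
    (hNs2 x hx).add ((contDiffAt_const.mul (contDiffAt_norm ℝ (hx : x ≠ 0))).contDiffWithinAt)
  have hdiff : ∀ F : E → ℝ, ContDiffOn ℝ 2 F U → ∀ x ∈ U, DifferentiableAt ℝ F x :=
    fun F hF x hx => (hF.contDiffAt (hUo.mem_nhds hx)).differentiableAt two_ne_zero
  have hdd : ∀ F : E → ℝ, ContDiffOn ℝ 2 F U → ∀ x ∈ U,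
      DifferentiableAt ℝ (fderiv ℝ F) x := fun F hF x hx =>
    ((hF.contDiffAt (hUo.mem_nhds hx)).fderiv_right
      (by norm_num : (1 : WithTop ℕ∞) + 1 ≤ 2)).differentiableAt one_ne_zero
  -- first derivative decomposition
  have hDn : ∀ x ∈ U, fderiv ℝ n x = fderiv ℝ N x + c • fderiv ℝ e x := by
    intro x hx
    exact ((hdiff N hNs2 x hx).hasFDerivAt.add
      ((hdiff e hes2 x hx).hasFDerivAt.const_mul c)).fderiv
  -- Euler identity for n
  have hnh : ∀ (a : ℝ) (x : E), n (a • x) = |a| * n x := by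
    intro a x
    simp only [hn_def]
    rw [hNh a x, norm_smul, Real.norm_eq_abs]
    ring
  have hEuler : fderiv ℝ n v v = n v := by
    have hL : ∀ t : ℝ, HasDerivAt (fun t : ℝ => t • v + v) v t := fun t => by
      simpa using ((hasDerivAt_id t).smul_const v).add_const v
    have h1 : HasDerivAt (fun t : ℝ => n (t • v + v)) (fderiv ℝ n v v) 0 := by
      have hF : HasFDerivAt n (fderiv ℝ n v) ((fun t : ℝ => t • v + v) 0) := by
        simpa using (hdiff n hns2 v hvU).hasFDerivAt
      exact hF.comp_hasDerivAt 0 (hL 0)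
    have h2 : HasDerivAt (fun t : ℝ => n (t • v + v)) (n v) 0 := by
      have hbase : HasDerivAt (fun t : ℝ => (t + 1) * n v) (n v) 0 := by
        simpa using ((hasDerivAt_id (0:ℝ)).add_const (1:ℝ)).mul_const (n v)
      have heq : (fun t : ℝ => n (t • v + v)) =ᶠ[𝓝 (0:ℝ)] fun t : ℝ => (t + 1) * n v := by
        filter_upwards [eventually_gt_nhds (show (-1:ℝ) < 0 by norm_num)] with t ht
        have hsm : t • v + v = (t + 1) • v := by rw [add_smul, one_smul]
        rw [hsm, hnh (t + 1) v, abs_of_nonneg (by linarith : (0:ℝ) ≤ t + 1)]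
      exact hbase.congr_of_eventuallyEq heq
    exact h1.unique h2
  -- second derivative decomposition
  have hD2n : fderiv ℝ (fderiv ℝ n) v = fderiv ℝ (fderiv ℝ N) v + c • fderiv ℝ (fderiv ℝ e) v := by
    have heq : fderiv ℝ n =ᶠ[𝓝 v] fun x => fderiv ℝ N x + c • fderiv ℝ e x := by
      filter_upwards [hUo.mem_nhds hvU] with x hx
      exact hDn x hx
    rw [heq.fderiv_eq]
    exact ((hdd N hNs2 v hvU).hasFDerivAt.add
      ((hdd e hes2 v hvU).hasFDerivAt.const_smul c)).fderiv
  -- Hessian of the square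
  have heqf : fderiv ℝ (fun u => (N u + c * ‖u‖) ^ 2) =ᶠ[𝓝 v]
      fun x => n x • fderiv ℝ n x + n x • fderiv ℝ n x := by
    filter_upwards [hUo.mem_nhds hvU] with x hx
    have h := (hdiff n hns2 x hx).hasFDerivAt
    have h2 := h.mul h
    have h3 : (fun u => (N u + c * ‖u‖) ^ 2) = fun u => n u * n u := by
      funext u; simp only [hn_def]; ring
    rw [h3]
    exact h2.fderiv
  have hD2f : fderiv ℝ (fderiv ℝ (fun u => (N u + c * ‖u‖) ^ 2)) v w w
      = 2 * (n v * (fderiv ℝ (fderiv ℝ n) v w w) + (fderiv ℝ n v w) ^ 2) := by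
    rw [heqf.fderiv_eq]
    have h1 : HasFDerivAt (fun x => n x • fderiv ℝ n x)
        (n v • fderiv ℝ (fderiv ℝ n) v + (fderiv ℝ n v).smulRight (fderiv ℝ n v)) v :=
      (hdiff n hns2 v hvU).hasFDerivAt.smul (hdd n hns2 v hvU).hasFDerivAt
    rw [show fderiv ℝ (fun x => n x • fderiv ℝ n x + n x • fderiv ℝ n x) v = _ from
      (h1.add h1).fderiv]
    simp only [ContinuousLinearMap.add_apply, ContinuousLinearMap.smul_apply,
      ContinuousLinearMap.smulRight_apply, smul_eq_mul]
    ring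
  -- the pieces of the Hessian of n
  have hD2nww : fderiv ℝ (fderiv ℝ n) v w w
      = fderiv ℝ (fderiv ℝ N) v w w + c * (fderiv ℝ (fderiv ℝ e) v w w) := by
    rw [hD2n]
    simp [ContinuousLinearMap.add_apply, ContinuousLinearMap.smul_apply, smul_eq_mul]
  have hNconv : ConvexOn ℝ Set.univ N := by
    refine ⟨convex_univ, fun x _ y _ a b ha hb hab => ?_⟩
    calc N (a • x + b • y) ≤ N (a • x) + N (b • y) := hNt _ _
      _ = a * N x + b * N y := by
          rw [hNh, hNh, abs_of_nonneg ha, abs_of_nonneg hb]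
      _ = a • N x + b • N y := rfl
  have hD2N_nonneg : 0 ≤ fderiv ℝ (fderiv ℝ N) v w w :=
    aux_hess_nonneg hUo hNs2 hNconv hvU w
  have hD2e_eval : fderiv ℝ (fderiv ℝ e) v w w = ‖w‖ ^ 2 / ‖v‖ - ⟪v, w⟫ ^ 2 / ‖v‖ ^ 3 :=
    aux_d2_norm hv
  have hnv0 : (0:ℝ) < ‖v‖ := norm_pos_iff.2 hv
  have hCS : ⟪v, w⟫ ^ 2 ≤ ‖v‖ ^ 2 * ‖w‖ ^ 2 := by
    have := real_inner_mul_inner_self_le v w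
    rw [real_inner_self_eq_norm_sq, real_inner_self_eq_norm_sq] at this
    nlinarith [this]
  have hD2e_nonneg : 0 ≤ fderiv ℝ (fderiv ℝ e) v w w := by
    rw [hD2e_eval, sub_nonneg, div_le_div_iff₀ (by positivity) (by positivity)]
    nlinarith [mul_le_mul_of_nonneg_right hCS hnv0.le]
  rcases eq_or_ne (fderiv ℝ n v w) 0 with h0 | h0
  · -- w must not be parallel to v, so the Euclidean Hessian term is positive
    have hD2e_pos : 0 < fderiv ℝ (fderiv ℝ e) v w w := by
      rcases hD2e_nonneg.lt_or_eq with h | h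
      · exact h
      · exfalso
        have hB0 : ‖w‖ ^ 2 / ‖v‖ - ⟪v, w⟫ ^ 2 / ‖v‖ ^ 3 = 0 := by rw [← hD2e_eval, ← h]
        have heqCS : ⟪v, w⟫ ^ 2 = ‖v‖ ^ 2 * ‖w‖ ^ 2 := by
          field_simp at hB0
          nlinarith [hB0, hnv0]
        -- equality in Cauchy-Schwarz: w is a multiple of v
        obtain ⟨s, hs0, hws⟩ : ∃ s : ℝ, s ≠ 0 ∧ w = s • v := by
          have hfac : (⟪v, w⟫ - ‖v‖ * ‖w‖) * (⟪v, w⟫ + ‖v‖ * ‖w‖) = 0 := by nlinarith [heqCS]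
          have hw0 : (0:ℝ) < ‖w‖ := norm_pos_iff.2 hw
          rcases mul_eq_zero.1 hfac with h1 | h1
          · have : ⟪v, w⟫ = ‖v‖ * ‖w‖ := by linarith
            have h2 : ‖w‖ • v = ‖v‖ • w := inner_eq_norm_mul_iff_real.1 this
            refine ⟨‖v‖⁻¹ * ‖w‖, by positivity, ?_⟩
            rw [mul_smul, h2, smul_smul, inv_mul_cancel₀ (ne_of_gt hnv0), one_smul]
          · have hneg : ⟪v, -w⟫ = ‖v‖ * ‖-w‖ := by
              rw [inner_neg_right, norm_neg]; linarith
            have h2 : ‖-w‖ • v = ‖v‖ • (-w) := inner_eq_norm_mul_iff_real.1 hneg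
            rw [norm_neg, smul_neg] at h2
            refine ⟨-(‖v‖⁻¹ * ‖w‖), neg_ne_zero.2 (by positivity), ?_⟩
            rw [neg_smul, mul_smul, h2]
            simp [smul_smul, inv_mul_cancel₀ (ne_of_gt hnv0)]
        have : fderiv ℝ n v w = s * n v := by
          rw [hws, map_smul, smul_eq_mul, hEuler]
        rw [this] at h0
        exact hs0 (by
          rcases mul_eq_zero.1 h0 with h | h
          · exact h
          · exact absurd h (ne_of_gt hnv))
    rw [hD2f, h0, hD2nww]
    have h1 : 0 < c * (fderiv ℝ (fderiv ℝ e) v w w) := mul_pos hc hD2e_pos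
    have h2 : 0 < fderiv ℝ (fderiv ℝ N) v w w + c * (fderiv ℝ (fderiv ℝ e) v w w) := by
      linarith
    have h3 := mul_pos hnv h2
    nlinarith [h3]
  · rw [hD2f, hD2nww]
    have hsq : 0 < (fderiv ℝ n v w) ^ 2 := by positivity
    have h2 : 0 ≤ fderiv ℝ (fderiv ℝ N) v w w + c * (fderiv ℝ (fderiv ℝ e) v w w) :=
      add_nonneg hD2N_nonneg (mul_nonneg hc.le hD2e_nonneg)
    have h3 := mul_nonneg hnv.le h2
    nlinarith [h3, hsq]


/-- regularisation step in Lemma 3.10: adding a positive multiple of the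
Euclidean norm to a norm on `ℝ^d` which is `C^∞` away from `0` yields a norm which is
`C^∞` away from `0` and strongly convex: the Hessian of its square at every `v ≠ 0` is a
positive definite bilinear form. -/
theorem stmt_14 (d : ℕ) (hd : 1 ≤ d)
    (N : EuclideanSpace ℝ (Fin d) → ℝ) (hN : IsNormOn N)
    (hNs : ContDiffOn ℝ (⊤ : ℕ∞) N {(0 : EuclideanSpace ℝ (Fin d))}ᶜ)
    (c : ℝ) (hc : 0 < c) :
    IsNormOn (fun v : EuclideanSpace ℝ (Fin d) => N v + c * ‖v‖) ∧
    ContDiffOn ℝ (⊤ : ℕ∞) (fun v : EuclideanSpace ℝ (Fin d) => N v + c * ‖v‖)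
      {(0 : EuclideanSpace ℝ (Fin d))}ᶜ ∧
    (∀ v : EuclideanSpace ℝ (Fin d), v ≠ 0 → ∀ w : EuclideanSpace ℝ (Fin d), w ≠ 0 →
      0 < iteratedFDeriv ℝ 2 (fun u => (N u + c * ‖u‖) ^ 2) v ![w, w]) := by
  obtain ⟨hN0, hNh, hNt⟩ := hN
  have hNnn : ∀ v, 0 ≤ N v := by
    intro v
    have h1 : N (-v) = N v := by simpa using hNh (-1) v
    have h2 : N (v + -v) ≤ N v + N (-v) := hNt v (-v)
    have h3 : N 0 = 0 := (hN0 0).2 rfl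
    simp only [add_neg_cancel, h3, h1] at h2
    linarith
  refine ⟨?_, ?_, ?_⟩
  · refine ⟨fun v => ?_, fun a v => ?_, fun v w => ?_⟩
    · constructor
      · intro h
        have h1 := hNnn v
        have h2 : 0 ≤ c * ‖v‖ := by positivity
        simp only at h
        have h3 : c * ‖v‖ = 0 := by linarith
        have : ‖v‖ = 0 := by
          rcases mul_eq_zero.1 h3 with h | h
          · exact absurd h (ne_of_gt hc)
          · exact h
        exact norm_eq_zero.1 this
      · rintro rfl
        simp [(hN0 0).2 rfl]
    · simp only
      rw [hNh a v, norm_smul, Real.norm_eq_abs]; ring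
    · simp only
      have := hNt v w
      have h2 : ‖v + w‖ ≤ ‖v‖ + ‖w‖ := norm_add_le v w
      nlinarith [hc.le]
  · intro x hx
    have hx0 : x ≠ 0 := hx
    exact (hNs x hx).add ((contDiffAt_const.mul (contDiffAt_norm ℝ hx0)).contDiffWithinAt)
  · intro v hv w hw
    rw [iteratedFDeriv_two_apply]
    simp only [Matrix.cons_val_zero, Matrix.cons_val_one, Matrix.head_cons]
    exact aux_core N ⟨hN0, hNh, hNt⟩ (hNs.of_le (by exact WithTop.coe_le_coe.2 (le_top : (2 : ℕ∞) ≤ ⊤))) c hc hv hw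
end

section
/- Let M be a smooth (C^∞), Hausdorff, second-countable finite-dimensional manifold, d ≥ 1, and let {V_x}_{x∈M} be a family of linear subspaces of ℝ^d. Then the following are equivalent: (i) for every x̄ ∈ M and v̄ ∈ V_{x̄} there exist an open neighbourhood U of x̄ and a continuous map v : U → ℝ^d with v(x̄) = v̄ and v(x) ∈ V_x for all x ∈ U; (iii) for every x̄ ∈ M there exist an open neighbourhood U of x̄, a natural number k, and a continuous map A : U → L(ℝ^k, ℝ^d) (with the operator norm topology) such that V_x = range A(x) for every x ∈ U. -/
/-!
For every point `y`, continuous bounded sections through a basis of `V y` stay linearly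
independent near `y`, so they span `V z` at every nearby `z` with `dim V z = dim V y`. As `M` is
hereditarily Lindelöf, countably many such families span every fibre, and the weighted Gram
operators `A z = ∑ cₙ sₙ(z) sₙ(z)ᵀ` form a continuous family of positive operators on `ℝ^d`
whose range at `z` is the span of the `sₙ(z)`, that is `V z`. Conversely, `A x u₀` with
`A x₀ u₀ = v₀` is a local section through `v₀`.
-/

open scoped Manifold

open InnerProductSpace Set Submodule Module

section Gram

variable {E ι : Type*} [NormedAddCommGroup E] [InnerProductSpace ℝ E]

lemma hasSum_inner_tsum_smul_rankOne_self {c : ι → ℝ} {v : ι → E}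
    (hsum : Summable fun n => c n • rankOne ℝ (v n) (v n)) (u w : E) :
    HasSum (fun n => c n * (⟪v n, u⟫_ℝ * ⟪v n, w⟫_ℝ))
      ⟪(∑' n, c n • rankOne ℝ (v n) (v n)) u, w⟫_ℝ := by
  have := hsum.hasSum.mapL ((innerSL ℝ w).comp (ContinuousLinearMap.apply ℝ E u))
  simpa [real_inner_smul_left, real_inner_comm, mul_comm, mul_left_comm] using this

theorem range_tsum_smul_rankOne_self [FiniteDimensional ℝ E] {c : ι → ℝ} (hc : ∀ n, 0 < c n)
    {v : ι → E} (hsum : Summable fun n => c n • rankOne ℝ (v n) (v n)) :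
    (∑' n, c n • rankOne ℝ (v n) (v n)).toLinearMap.range = span ℝ (range v) := by
  set T := ∑' n, c n • rankOne ℝ (v n) (v n)
  have hT := hasSum_inner_tsum_smul_rankOne_self hsum
  have hsymm : (T : E →ₗ[ℝ] E).IsSymmetric := fun u w => by
    rw [ContinuousLinearMap.coe_coe, real_inner_comm (T w) u]
    refine (hT u w).unique ?_
    simpa only [mul_comm (⟪v _, u⟫_ℝ)] using hT w u
  have hker : LinearMap.ker (T : E →ₗ[ℝ] E) = (span ℝ (range v))ᗮ := by
    ext w
    rw [LinearMap.mem_ker, ContinuousLinearMap.coe_coe]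
    constructor
    · intro hw
      have h0 := hT w w
      rw [hw, inner_zero_left, hasSum_zero_iff_of_nonneg fun n =>
        mul_nonneg (hc n).le (mul_self_nonneg _)] at h0
      have horth : ∀ n, ⟪v n, w⟫_ℝ = 0 := fun n => by
        simpa [(hc n).ne'] using congrFun h0 n
      exact (isOrtho_span.2 (by simpa using horth) : span ℝ (range v) ⟂ span ℝ {w}).symm.le
        (mem_span_singleton_self w)
    · intro hw
      rw [← inner_self_eq_zero (𝕜 := ℝ)]
      refine (hT w (T w)).unique ?_
      simp [inner_right_of_mem_orthogonal (subset_span (mem_range_self _)) hw, hasSum_zero]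
  rw [← orthogonal_orthogonal (LinearMap.range _), hsymm.orthogonal_range, hker,
    orthogonal_orthogonal]

end Gram

lemma exists_continuous_ne_zero_tsupport_subset {X : Type*} [TopologicalSpace X]
    [CompletelyRegularSpace X] {U : Set X} (hU : IsOpen U) {y : X} (hy : y ∈ U) :
    ∃ φ : X → ℝ, Continuous φ ∧ φ y ≠ 0 ∧ tsupport φ ⊆ U := by
  obtain ⟨f, hf, hfy, hfU⟩ := CompletelyRegularSpace.completely_regular_isOpen y U hU hy
  refine ⟨fun z => max (1 / 2 - f z) 0, by fun_prop, by simp [hfy], ?_⟩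
  have hclosed : IsClosed {z | (f z : ℝ) ≤ 1 / 2} := isClosed_le (by fun_prop) continuous_const
  refine (closure_minimal (fun z hz => ?_) hclosed).trans fun z hz => ?_
  · simp only [Function.mem_support, ne_eq, max_eq_right_iff, not_le, sub_pos] at hz
    exact hz.le
  · by_contra h
    have : (f z : ℝ) = 1 := by simpa using congrArg Subtype.val (hfU h)
    norm_num [this] at hz

lemma span_range_eq_of_linearIndependent {K E : Type*} [DivisionRing K] [AddCommGroup E]
    [Module K E] {W : Submodule K E} [FiniteDimensional K W] {n : ℕ} {v : Fin n → E}
    (hv : ∀ i, v i ∈ W) (hind : LinearIndependent K v) (hle : finrank K W ≤ n) :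
    span K (range v) = W :=
  eq_of_le_of_finrank_le (span_le.2 (range_subset_iff.2 hv))
    (by rwa [finrank_span_eq_card hind, Fintype.card_fin])

lemma exists_countable_levelwise_subcover {X α : Type*} [TopologicalSpace X]
    [HereditarilyLindelofSpace X] [Countable α] (f : X → α) {W : X → Set X}
    (hW : ∀ y, IsOpen (W y)) (hmem : ∀ y, y ∈ W y) :
    ∃ T : Set X, T.Countable ∧ ∀ z, ∃ y ∈ T, f y = f z ∧ z ∈ W y := by
  have hsub : ∀ a, ∃ r : Set (f ⁻¹' {a}), r.Countable ∧ f ⁻¹' {a} ⊆ ⋃ y ∈ r, W y := fun a =>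
    (HereditarilyLindelofSpace.isLindelof _).elim_countable_subcover
      (fun y : f ⁻¹' {a} => W y)
      (fun y => hW y) fun z hz => mem_iUnion.2 ⟨⟨z, hz⟩, hmem z⟩
  choose r hr hcover using hsub
  refine ⟨⋃ a, Subtype.val '' r a, countable_iUnion fun a => (hr a).image _, fun z => ?_⟩
  obtain ⟨y, hy, hzy⟩ := mem_iUnion₂.1 (hcover (f z) rfl)
  exact ⟨y, mem_iUnion.2 ⟨f z, mem_image_of_mem _ hy⟩, y.2, hzy⟩

universe u

section Distribution

variable {X : Type u} [TopologicalSpace X] {d : ℕ}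
  {V : X → Submodule ℝ (EuclideanSpace ℝ (Fin d))}

lemma ContinuousDistribution.exists_bounded_section [CompletelyRegularSpace X]
    (hV : ContinuousDistribution V) {y : X} {v₀ : EuclideanSpace ℝ (Fin d)} (hv₀ : v₀ ∈ V y) :
    ∃ (s : X → EuclideanSpace ℝ (Fin d)) (a : ℝ), Continuous s ∧ (∀ z, ‖s z‖ ≤ 1) ∧
      (∀ z, s z ∈ V z) ∧ a ≠ 0 ∧ s y = a • v₀ := by
  obtain ⟨U, hU, hyU, v, hv, hvy, hvV⟩ := hV y v₀ hv₀
  obtain ⟨φ, hφ, hφy, hφU⟩ := exists_continuous_ne_zero_tsupport_subset hU hyU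
  have hφv : Continuous fun z => φ z • v z := continuous_of_tsupport fun z hz =>
    hφ.continuousAt.smul (hv.continuousAt (hU.mem_nhds (hφU (tsupport_smul_subset_left _ _ hz))))
  have hφvV : ∀ z, φ z • v z ∈ V z := fun z => by
    by_cases hz : z ∈ U
    · exact smul_mem _ _ (hvV z hz)
    · rw [image_eq_zero_of_notMem_tsupport fun h => hz (hφU h), zero_smul]
      exact zero_mem _
  -- rescale by `(1 + ‖w‖)⁻¹` to bound the section without changing the line it spans
  refine ⟨fun z => (1 + ‖φ z • v z‖)⁻¹ • φ z • v z, (1 + ‖φ y • v y‖)⁻¹ * φ y,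
    ?_, fun z => ?_, fun z => smul_mem _ _ (hφvV z), by positivity, by simp only [hvy, smul_smul]⟩
  · exact ((continuous_const.add hφv.norm).inv₀ fun z =>
    (add_pos_of_pos_of_nonneg one_pos (norm_nonneg _)).ne').smul hφv
  · rw [norm_smul, norm_inv, Real.norm_of_nonneg (by positivity : (0 : ℝ) ≤ 1 + ‖φ z • v z‖)]
    exact inv_mul_le_one_of_le₀ (by linarith) (by positivity)

lemma ContinuousDistribution.exists_bounded_sections_linearIndependent [CompletelyRegularSpace X]
    (hV : ContinuousDistribution V) (y : X) :
    ∃ s : Fin (finrank ℝ (V y)) → X → EuclideanSpace ℝ (Fin d), (∀ i, Continuous (s i)) ∧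
      (∀ i z, ‖s i z‖ ≤ 1) ∧ (∀ i z, s i z ∈ V z) ∧ LinearIndependent ℝ fun i => s i y := by
  let b := finBasis ℝ (V y)
  choose s a hs hs1 hsV ha hsy using fun i => hV.exists_bounded_section (b i).2
  refine ⟨s, hs, hs1, hsV, ?_⟩
  have hb : LinearIndependent ℝ fun i => (b i : EuclideanSpace ℝ (Fin d)) :=
    b.linearIndependent.map' (V y).subtype (V y).ker_subtype
  convert hb.units_smul fun i => Units.mk0 (a i) (ha i) using 1
  ext i : 1
  exact hsy i

theorem ContinuousDistribution.exists_countable_spanning_sections [SecondCountableTopology X]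
    [CompletelyRegularSpace X] (hV : ContinuousDistribution V) :
    ∃ (ι : Type u) (_ : Countable ι) (s : ι → X → EuclideanSpace ℝ (Fin d)),
      (∀ n, Continuous (s n)) ∧ (∀ n z, ‖s n z‖ ≤ 1) ∧
      ∀ z, span ℝ (range fun n => s n z) = V z := by
  choose s hs hs1 hsV hind using hV.exists_bounded_sections_linearIndependent
  -- near `y`, the sections `s y` span every fibre of the same rank as `V y`
  obtain ⟨T, hT, hcover⟩ := exists_countable_levelwise_subcover (fun y => finrank ℝ (V y))
    (W := fun y => {z | LinearIndependent ℝ fun i => s y i z})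
    (fun y => isOpen_setOfPred_linearIndependent.preimage (continuous_pi (hs y))) hind
  have := hT.to_subtype
  refine ⟨Σ y : T, Fin (finrank ℝ (V y)), inferInstance, fun n => s n.1 n.2,
    fun n => hs _ _, fun n => hs1 _ _, fun z => ?_⟩
  obtain ⟨y, hyT, hyz, hz⟩ := hcover z
  refine le_antisymm (span_le.2 (range_subset_iff.2 fun n => hsV _ _ _)) ?_
  rw [← span_range_eq_of_linearIndependent (fun i => hsV y i z) hz hyz.ge]
  exact span_mono (range_subset_iff.2 fun i => ⟨⟨⟨y, hyT⟩, i⟩, rfl⟩)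

theorem ContinuousDistribution.exists_continuous_range_eq [SecondCountableTopology X]
    [CompletelyRegularSpace X] (hV : ContinuousDistribution V) :
    ∃ A : X → EuclideanSpace ℝ (Fin d) →L[ℝ] EuclideanSpace ℝ (Fin d), Continuous A ∧
      ∀ z, (A z).toLinearMap.range = V z := by
  obtain ⟨ι, _, s, hs, hs1, hspan⟩ := hV.exists_countable_spanning_sections
  obtain ⟨c, hc, _, hcsum, -⟩ := NNReal.exists_pos_sum_of_countable one_ne_zero ι
  have hbound : ∀ n z, ‖(c n : ℝ) • rankOne ℝ (s n z) (s n z)‖ ≤ c n := fun n z => by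
    rw [norm_smul, norm_rankOne, NNReal.norm_eq]
    exact mul_le_of_le_one_right (c n).2 (mul_le_one₀ (hs1 n z) (norm_nonneg _) (hs1 n z))
  have hcsum' : Summable fun n => (c n : ℝ) := NNReal.summable_coe.2 hcsum.summable
  refine ⟨fun z => ∑' n, (c n : ℝ) • rankOne ℝ (s n z) (s n z),
    continuous_tsum (fun n => ?_) hcsum' hbound, fun z => ?_⟩
  · have := hs n
    simp only [rankOne_def]
    fun_prop
  · rw [range_tsum_smul_rankOne_self (fun n => NNReal.coe_pos.2 (hc n))
      (hcsum'.of_norm_bounded (hbound · z)), hspan z]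

theorem ContinuousDistribution.of_locally_range
    (h : ∀ x₀ : X, ∃ (U : Set X) (k : ℕ)
      (A : X → EuclideanSpace ℝ (Fin k) →L[ℝ] EuclideanSpace ℝ (Fin d)),
      IsOpen U ∧ x₀ ∈ U ∧ ContinuousOn A U ∧
      ∀ x ∈ U, ∀ w, w ∈ V x ↔ ∃ u, A x u = w) :
    ContinuousDistribution V := by
  intro x₀ v₀ hv₀
  obtain ⟨U, k, A, hU, hx₀U, hA, hAV⟩ := h x₀
  obtain ⟨u₀, hu₀⟩ := (hAV x₀ hx₀U v₀).1 hv₀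
  exact ⟨U, hU, hx₀U, fun x => A x u₀,
    (ContinuousLinearMap.apply ℝ _ u₀).continuous.comp_continuousOn hA, hu₀,
    fun x hx => (hAV x hx _).2 ⟨u₀, rfl⟩⟩

end Distribution

theorem stmt_15_general (m d : ℕ) (M : Type*) [TopologicalSpace M] [T2Space M]
    [SecondCountableTopology M] [ChartedSpace (EuclideanSpace ℝ (Fin m)) M]
    (V : M → Submodule ℝ (EuclideanSpace ℝ (Fin d))) :
    ContinuousDistribution V ↔
      ∀ x₀ : M, ∃ (U : Set M) (k : ℕ)
        (A : M → EuclideanSpace ℝ (Fin k) →L[ℝ] EuclideanSpace ℝ (Fin d)),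
        IsOpen U ∧ x₀ ∈ U ∧ ContinuousOn A U ∧
        ∀ x ∈ U, ∀ w : EuclideanSpace ℝ (Fin d),
          w ∈ V x ↔ ∃ u : EuclideanSpace ℝ (Fin k), A x u = w := by
  have := ChartedSpace.locallyCompactSpace (EuclideanSpace ℝ (Fin m)) M
  refine ⟨fun hV x₀ => ?_, ContinuousDistribution.of_locally_range⟩
  obtain ⟨A, hA, hrange⟩ := hV.exists_continuous_range_eq
  refine ⟨univ, d, A, isOpen_univ, mem_univ x₀, hA.continuousOn, fun x _ w => ?_⟩
  rw [← hrange x, LinearMap.mem_range]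
  rfl

/-- (equivalence i) ⟺ iii) of Theorem 3.3): a family of subspaces of
`ℝ^d` over a smooth manifold `M` is a continuous distribution if and only if it is locally
the range of a continuous morphism `A : U → L(ℝ^k, ℝ^d)` from a trivial bundle of finite
rank (the space of linear maps carrying the operator norm topology). -/
theorem stmt_15 (m d : ℕ) (hd : 1 ≤ d) (M : Type*) [TopologicalSpace M] [T2Space M]
    [SecondCountableTopology M] [ChartedSpace (EuclideanSpace ℝ (Fin m)) M]
    [IsManifold (𝓡 m) (⊤ : ℕ∞) M]
    (V : M → Submodule ℝ (EuclideanSpace ℝ (Fin d))) :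
    ContinuousDistribution V ↔
      ∀ x₀ : M, ∃ (U : Set M) (k : ℕ)
        (A : M → EuclideanSpace ℝ (Fin k) →L[ℝ] EuclideanSpace ℝ (Fin d)),
        IsOpen U ∧ x₀ ∈ U ∧ ContinuousOn A U ∧
        ∀ x ∈ U, ∀ w : EuclideanSpace ℝ (Fin d),
          w ∈ V x ↔ ∃ u : EuclideanSpace ℝ (Fin k), A x u = w :=
  stmt_15_general m d M V
end
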